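/- If G is a maximal cofinitary subgroup of S(ω) (i.e., every non-identity element of G has only finitely many fixed points, and no proper supergroup of G in S(ω) has this property), then the action of G on ω has only finitely many orbits. -/

import Mathlib

open Function Set

namespace Kast

abbrev PP := Equiv.Perm ℕ

/-- signed generator -/
def sg (σ : PP) (b : Bool) : PP := if b then σ else σ⁻¹

def blk (σ : PP) (p : PP × Bool) : PP := p.1 * sg σ p.2

def Wrd (σ : PP) (L : List (PP × Bool)) : PP := (L.map (blk σ)).prod

@[simp] lemma Wrd_nil (σ : PP) : Wrd σ [] = 1 := rfl

@[simp] lemma Wrd_cons (σ : PP) (p : PP × Bool) (t : List (PP × Bool)) :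
    Wrd σ (p :: t) = blk σ p * Wrd σ t := by
  simp [Wrd]

@[simp] lemma Wrd_append (σ : PP) (A B : List (PP × Bool)) :
    Wrd σ (A ++ B) = Wrd σ A * Wrd σ B := by
  simp [Wrd]

lemma sg_not (σ : PP) (b : Bool) : sg σ (!b) = (sg σ b)⁻¹ := by
  cases b <;> simp [sg]

lemma sg_mul_not (σ : PP) (b : Bool) : sg σ b * sg σ (!b) = 1 := by
  rw [sg_not]; exact mul_inv_cancel _

lemma fix_conj (w v : PP) :
    {x : ℕ | (w⁻¹ * v * w) x = x} = ⇑w ⁻¹' {z : ℕ | v z = z} := by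
  ext x
  simp only [Set.mem_setOf_eq, Set.mem_preimage, Equiv.Perm.mul_apply,
    Equiv.Perm.inv_eq_iff_eq]

section Constr

variable {Qt : Type} (q : ℕ → Qt) (β : Qt → ℕ)

/-- weight of a pair -/
def me (a b : ℕ) : ℕ := max (β (q a)) (β (q b))

def Inv : List (ℕ × ℕ) → Prop
  | [] => True
  | p :: t => Inv t ∧ (∀ r ∈ t, p.1 ≠ r.1 ∧ p.2 ≠ r.2 ∧ me q β r.1 r.2 < me q β p.1 p.2)
      ∧ q p.1 ≠ q p.2

lemma le_foldr_max {l : List ℕ} {a : ℕ} (n : ℕ) (h : a ∈ l) : a ≤ l.foldr max n := by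
  induction l with
  | nil => cases h
  | cons b t ih =>
    rcases List.mem_cons.mp h with rfl | h
    · exact le_max_left _ _
    · exact le_trans (ih h) (le_max_right _ _)

/-- the bound used for freshness -/
def bnd (x : ℕ) (l : List (ℕ × ℕ)) : ℕ :=
  ((x :: (l.map Prod.fst ++ l.map Prod.snd)).map (fun z => β (q z))).foldr max 0

lemma bnd_self (x : ℕ) (l : List (ℕ × ℕ)) : β (q x) ≤ bnd q β x l :=
  le_foldr_max 0 (List.mem_map_of_mem (List.mem_cons_self))

lemma bnd_fst {r : ℕ × ℕ} {l : List (ℕ × ℕ)} (x : ℕ) (hr : r ∈ l) :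
    β (q r.1) ≤ bnd q β x l :=
  le_foldr_max 0 (List.mem_map_of_mem (List.mem_cons_of_mem _
    (List.mem_append_left _ (List.mem_map_of_mem hr))))

lemma bnd_snd {r : ℕ × ℕ} {l : List (ℕ × ℕ)} (x : ℕ) (hr : r ∈ l) :
    β (q r.2) ≤ bnd q β x l :=
  le_foldr_max 0 (List.mem_map_of_mem (List.mem_cons_of_mem _
    (List.mem_append_right _ (List.mem_map_of_mem hr))))

lemma ext_dom (hfresh : ∀ m : ℕ, ∃ x : ℕ, m < β (q x)) {l : List (ℕ × ℕ)} (hl : Inv q β l) {x : ℕ} (hx : ∀ r ∈ l, x ≠ r.1) :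
    ∃ y, Inv q β ((x, y) :: l) := by
  obtain ⟨y, hy⟩ := hfresh (bnd q β x l)
  refine ⟨y, hl, ?_, ?_⟩
  · intro r hr
    refine ⟨hx r hr, ?_, ?_⟩
    · intro h
      have hb := bnd_snd q β x hr
      rw [← h] at hb
      simp only at hb
      exact absurd hb (not_le.mpr hy)
    · have h1 : β (q r.1) ≤ bnd q β x l := bnd_fst q β x hr
      have h2 : β (q r.2) ≤ bnd q β x l := bnd_snd q β x hr
      calc me q β r.1 r.2 ≤ bnd q β x l := max_le h1 h2
        _ < β (q y) := hy
        _ ≤ me q β x y := le_max_right _ _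
  · intro h
    exact absurd (h ▸ bnd_self q β x l) (not_le.mpr hy)

lemma ext_ran (hfresh : ∀ m : ℕ, ∃ x : ℕ, m < β (q x)) {l : List (ℕ × ℕ)} (hl : Inv q β l) {y : ℕ} (hy : ∀ r ∈ l, y ≠ r.2) :
    ∃ x, Inv q β ((x, y) :: l) := by
  obtain ⟨x, hx⟩ := hfresh (bnd q β y l)
  refine ⟨x, hl, ?_, ?_⟩
  · intro r hr
    refine ⟨?_, hy r hr, ?_⟩
    · intro h
      have hb := bnd_fst q β y hr
      rw [← h] at hb
      simp only at hb
      exact absurd hb (not_le.mpr hx)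
    · have h1 : β (q r.1) ≤ bnd q β y l := bnd_fst q β y hr
      have h2 : β (q r.2) ≤ bnd q β y l := bnd_snd q β y hr
      calc me q β r.1 r.2 ≤ bnd q β y l := max_le h1 h2
        _ < β (q x) := hx
        _ ≤ me q β x y := le_max_left _ _
  · intro h
    exact absurd (h.symm ▸ bnd_self q β y l) (not_le.mpr hx)

section Stages

variable (hfresh : ∀ m : ℕ, ∃ x : ℕ, m < β (q x))

noncomputable def stepD (n : ℕ) (L : {l : List (ℕ × ℕ) // Inv q β l}) :
    {l : List (ℕ × ℕ) // Inv q β l} :=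
  if hx : ∀ r ∈ L.1, n ≠ r.1 then
    ⟨(n, Classical.choose (ext_dom q β hfresh L.2 hx)) :: L.1,
      Classical.choose_spec (ext_dom q β hfresh L.2 hx)⟩
  else L

noncomputable def stepR (n : ℕ) (L : {l : List (ℕ × ℕ) // Inv q β l}) :
    {l : List (ℕ × ℕ) // Inv q β l} :=
  if hy : ∀ r ∈ L.1, n ≠ r.2 then
    ⟨(Classical.choose (ext_ran q β hfresh L.2 hy), n) :: L.1,
      Classical.choose_spec (ext_ran q β hfresh L.2 hy)⟩
  else L

lemma mem_stepD {n : ℕ} {L} {p : ℕ × ℕ} (h : p ∈ L.1) : p ∈ (stepD q β hfresh n L).1 := by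
  unfold stepD; split
  · exact List.mem_cons_of_mem _ h
  · exact h

lemma mem_stepR {n : ℕ} {L} {p : ℕ × ℕ} (h : p ∈ L.1) : p ∈ (stepR q β hfresh n L).1 := by
  unfold stepR; split
  · exact List.mem_cons_of_mem _ h
  · exact h

lemma covD (n : ℕ) (L) : ∃ r ∈ (stepD q β hfresh n L).1, r.1 = n := by
  unfold stepD; split
  · exact ⟨_, List.mem_cons_self, rfl⟩
  · next hx =>
    push_neg at hx
    obtain ⟨r, hr, h⟩ := hx
    exact ⟨r, hr, h.symm⟩

lemma covR (n : ℕ) (L) : ∃ r ∈ (stepR q β hfresh n L).1, r.2 = n := by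
  unfold stepR; split
  · exact ⟨_, List.mem_cons_self, rfl⟩
  · next hy =>
    push_neg at hy
    obtain ⟨r, hr, h⟩ := hy
    exact ⟨r, hr, h.symm⟩

noncomputable def S : ℕ → {l : List (ℕ × ℕ) // Inv q β l}
  | 0 => ⟨[], trivial⟩
  | n+1 => stepR q β hfresh n (stepD q β hfresh n (S n))

lemma mem_S_le {n m : ℕ} (hnm : n ≤ m) {p : ℕ × ℕ} (h : p ∈ (S q β hfresh n).1) :
    p ∈ (S q β hfresh m).1 := by
  induction m, hnm using Nat.le_induction with
  | base => exact h
  | succ m _ ih => exact mem_stepR q β hfresh (mem_stepD q β hfresh ih)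

lemma fst_cov (n : ℕ) : ∃ r ∈ (S q β hfresh (n+1)).1, r.1 = n := by
  obtain ⟨r, hr, h⟩ := covD q β hfresh n (S q β hfresh n)
  exact ⟨r, mem_stepR q β hfresh hr, h⟩

lemma snd_cov (n : ℕ) : ∃ r ∈ (S q β hfresh (n+1)).1, r.2 = n :=
  covR q β hfresh n _

end Stages

lemma inv_fst_unique : ∀ (l : List (ℕ × ℕ)), Inv q β l →
    ∀ x y y', (x, y) ∈ l → (x, y') ∈ l → y = y'
  | [], _, x, y, y', h, _ => by cases h
  | p :: t, hl, x, y, y', h1, h2 => by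
    rcases List.mem_cons.mp h1 with e1 | m1 <;> rcases List.mem_cons.mp h2 with e2 | m2
    · exact congrArg Prod.snd (e1.trans e2.symm)
    · exact absurd (congrArg Prod.fst e1).symm (hl.2.1 _ m2).1
    · exact absurd (congrArg Prod.fst e2).symm (hl.2.1 _ m1).1
    · exact inv_fst_unique t hl.1 x y y' m1 m2

lemma inv_snd_unique : ∀ (l : List (ℕ × ℕ)), Inv q β l →
    ∀ x x' y, (x, y) ∈ l → (x', y) ∈ l → x = x'
  | [], _, x, x', y, h, _ => by cases h
  | p :: t, hl, x, x', y, h1, h2 => by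
    rcases List.mem_cons.mp h1 with e1 | m1 <;> rcases List.mem_cons.mp h2 with e2 | m2
    · exact congrArg Prod.fst (e1.trans e2.symm)
    · exact absurd (congrArg Prod.snd e1).symm (hl.2.1 _ m2).2.1
    · exact absurd (congrArg Prod.snd e2).symm (hl.2.1 _ m1).2.1
    · exact inv_snd_unique t hl.1 x x' y m1 m2

lemma inv_q_ne : ∀ (l : List (ℕ × ℕ)), Inv q β l → ∀ p ∈ l, q p.1 ≠ q p.2
  | [], _, p, h => by cases h
  | r :: t, hl, p, h => by
    rcases List.mem_cons.mp h with e | m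
    · exact e ▸ hl.2.2
    · exact inv_q_ne t hl.1 p m

lemma inv_me_ne : ∀ (l : List (ℕ × ℕ)), Inv q β l → ∀ p ∈ l, ∀ r ∈ l, p ≠ r →
    me q β p.1 p.2 ≠ me q β r.1 r.2
  | [], _, p, h, _, _, _ => by cases h
  | s :: t, hl, p, hp, r, hr, hne => by
    rcases List.mem_cons.mp hp with e1 | m1 <;> rcases List.mem_cons.mp hr with e2 | m2
    · exact absurd (e1.trans e2.symm) hne
    · exact e1 ▸ (ne_of_gt (hl.2.1 _ m2).2.2)
    · exact e2 ▸ (ne_of_lt (hl.2.1 _ m1).2.2)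
    · exact inv_me_ne t hl.1 p m1 r m2 hne

section Sigma

variable (hfresh : ∀ m : ℕ, ∃ x : ℕ, m < β (q x))

lemma exists_sig0 (n : ℕ) : ∃ y, (n, y) ∈ (S q β hfresh (n+1)).1 := by
  obtain ⟨⟨a, b⟩, hr, h⟩ := fst_cov q β hfresh n
  simp only at h
  subst h
  exact ⟨b, hr⟩

lemma exists_tau (n : ℕ) : ∃ x, (x, n) ∈ (S q β hfresh (n+1)).1 := by
  obtain ⟨⟨a, b⟩, hr, h⟩ := snd_cov q β hfresh n
  simp only at h
  subst h
  exact ⟨a, hr⟩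

noncomputable def sig0 (n : ℕ) : ℕ := Classical.choose (exists_sig0 q β hfresh n)

noncomputable def tau (n : ℕ) : ℕ := Classical.choose (exists_tau q β hfresh n)

lemma sig0_graph (n : ℕ) : (n, sig0 q β hfresh n) ∈ (S q β hfresh (n+1)).1 :=
  Classical.choose_spec (exists_sig0 q β hfresh n)

lemma tau_graph (n : ℕ) : (tau q β hfresh n, n) ∈ (S q β hfresh (n+1)).1 :=
  Classical.choose_spec (exists_tau q β hfresh n)

noncomputable def sigE : PP where
  toFun := sig0 q β hfresh
  invFun := tau q β hfresh
  left_inv := by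
    intro x
    set y := sig0 q β hfresh x with hy
    have h1 : (x, y) ∈ (S q β hfresh (max (x+1) (y+1))).1 :=
      mem_S_le q β hfresh (le_max_left _ _) (sig0_graph q β hfresh x)
    have h2 : (tau q β hfresh y, y) ∈ (S q β hfresh (max (x+1) (y+1))).1 :=
      mem_S_le q β hfresh (le_max_right _ _) (tau_graph q β hfresh y)
    exact inv_snd_unique q β _ (S q β hfresh (max (x+1) (y+1))).2 _ _ _ h2 h1
  right_inv := by
    intro y
    set x := tau q β hfresh y with hx
    have h1 : (x, y) ∈ (S q β hfresh (max (x+1) (y+1))).1 :=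
      mem_S_le q β hfresh (le_max_right _ _) (tau_graph q β hfresh y)
    have h2 : (x, sig0 q β hfresh x) ∈ (S q β hfresh (max (x+1) (y+1))).1 :=
      mem_S_le q β hfresh (le_max_left _ _) (sig0_graph q β hfresh x)
    exact inv_fst_unique q β _ (S q β hfresh (max (x+1) (y+1))).2 _ _ _ h2 h1

lemma sigE_graph (n : ℕ) : (n, sigE q β hfresh n) ∈ (S q β hfresh (n+1)).1 :=
  sig0_graph q β hfresh n

include hfresh in
lemma exists_sigma :
    ∃ σ : PP, (∀ x : ℕ, q (σ x) ≠ q x) ∧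
      ∃ c : ℕ → Qt, Injective c ∧ (∀ u, c u = q u ∨ c u = q (σ u)) ∧
        (∀ u, β (q u) ≤ β (c u) ∧ β (q (σ u)) ≤ β (c u)) := by
  set σ := sigE q β hfresh with hσ
  refine ⟨σ, ?_, ?_⟩
  · intro x
    exact (inv_q_ne q β _ (S q β hfresh (x+1)).2 _ (sigE_graph q β hfresh x)).symm
  · refine ⟨fun u => if β (q (σ u)) ≤ β (q u) then q u else q (σ u), ?_, ?_, ?_⟩
    · -- injectivity
      have hme : ∀ u, β (if β (q (σ u)) ≤ β (q u) then q u else q (σ u)) = me q β u (σ u) := by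
        intro u
        unfold me
        split
        · next h => exact (max_eq_left h).symm
        · next h => exact (max_eq_right (le_of_not_ge h)).symm
      intro u u' hc
      simp only at hc
      by_contra hne
      have h1 : (u, σ u) ∈ (S q β hfresh (max (u+1) (u'+1))).1 :=
        mem_S_le q β hfresh (le_max_left _ _) (sigE_graph q β hfresh u)
      have h2 : (u', σ u') ∈ (S q β hfresh (max (u+1) (u'+1))).1 :=
        mem_S_le q β hfresh (le_max_right _ _) (sigE_graph q β hfresh u')
      have hpne : (u, σ u) ≠ (u', σ u') := by
        intro h
        exact hne (congrArg Prod.fst h)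
      have := inv_me_ne q β _ (S q β hfresh (max (u+1) (u'+1))).2 _ h1 _ h2 hpne
      rw [← hme u, ← hme u', hc] at this
      exact this rfl
    · intro u
      dsimp only
      split
      · exact Or.inl rfl
      · exact Or.inr rfl
    · intro u
      constructor
      · dsimp only
        split
        · exact le_refl _
        · next h => exact le_of_lt (lt_of_not_ge h)
      · dsimp only
        split
        · next h => exact h
        · exact le_refl _

end Sigma

end Constr

section Core

variable {Qt : Type} (q : ℕ → Qt) (β : Qt → ℕ)

lemma core (σ : PP) (hσq : ∀ x : ℕ, q (σ x) ≠ q x)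
    (c : ℕ → Qt) (hcinj : Injective c)
    (hcor : ∀ u, c u = q u ∨ c u = q (σ u))
    (hcmax : ∀ u, β (q u) ≤ β (c u) ∧ β (q (σ u)) ≤ β (c u))
    (hβ : Injective β)
    (k : ℕ) (hk : 0 < k) (h : ℕ → PP) (ε : ℕ → Bool) (v : ℕ → ℕ)
    (hv : ∀ j < k, v j = h j (sg σ (ε j) (v (j+1))))
    (hvk : v k = v 0)
    (hq : ∀ j < k, ∀ z : ℕ, q (h j z) = q z) :
    ∃ i < k, ∃ j < k, ∃ m ≤ k, (j + 1) % k = i ∧ ε j = !(ε i) ∧ h i (v m) = v m := by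
  classical
  set y : ℕ → ℕ := fun j => sg σ (ε j) (v (j+1)) with hy
  set u : ℕ → ℕ := fun j => if ε j then v (j+1) else y j with hu
  -- basic facts
  have hyσ : ∀ j, ε j = true → y j = σ (v (j+1)) := by
    intro j hj; simp [hy, hj, sg]
  have hyσ' : ∀ j, ε j = false → σ (y j) = v (j+1) := by
    intro j hj; simp [hy, hj, sg]
  have hvy : ∀ j < k, v j = h j (y j) := by
    intro j hj; exact hv j hj
  have hqvy : ∀ j < k, q (v j) = q (y j) := by
    intro j hj; rw [hvy j hj, hq j hj]
  have hσu : ∀ j, σ (u j) = if ε j then y j else v (j+1) := by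
    intro j
    by_cases hj : ε j = true
    · simp [hu, hj, hyσ j hj]
    · simp only [Bool.not_eq_true] at hj
      simp [hu, hj, hyσ' j hj]
  have hqu : ∀ j < k, (q (u j) = q (v (j+1)) ∧ q (σ (u j)) = q (v j)) ∨
      (q (u j) = q (v j) ∧ q (σ (u j)) = q (v (j+1))) := by
    intro j hj
    by_cases hej : ε j = true
    · left
      constructor
      · simp [hu, hej]
      · rw [hσu j]; simp [hej]; exact (hqvy j hj).symm
    · right
      simp only [Bool.not_eq_true] at hej
      constructor
      · simp [hu, hej]; exact (hqvy j hj).symm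
      · rw [hσu j]; simp [hej]
  -- the two endpoints dominate
  have E1 : ∀ j < k, β (q (v j)) ≤ β (c (u j)) := by
    intro j hj
    rcases hqu j hj with ⟨_, h2⟩ | ⟨h1, _⟩
    · rw [← h2]; exact (hcmax (u j)).2
    · rw [← h1]; exact (hcmax (u j)).1
  have E2 : ∀ j < k, β (q (v (j+1))) ≤ β (c (u j)) := by
    intro j hj
    rcases hqu j hj with ⟨h1, _⟩ | ⟨_, h2⟩
    · rw [← h1]; exact (hcmax (u j)).1
    · rw [← h2]; exact (hcmax (u j)).2
  have EC : ∀ j < k, c (u j) = q (v j) ∨ c (u j) = q (v (j+1)) := by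
    intro j hj
    rcases hcor (u j) with hc | hc <;> rcases hqu j hj with ⟨h1, h2⟩ | ⟨h1, h2⟩
    · exact Or.inr (hc.trans h1)
    · exact Or.inl (hc.trans h1)
    · exact Or.inl (hc.trans h2)
    · exact Or.inr (hc.trans h2)
  -- wrap-around identification of q (v ·)
  have hvmod : ∀ j, j ≤ k → v j = v (j % k) := by
    intro j hj
    rcases lt_or_eq_of_le hj with hlt | heq
    · rw [Nat.mod_eq_of_lt hlt]
    · subst heq; rw [Nat.mod_self]; exact hvk
  -- Lemma B : two cyclically-consecutive steps using the same crossing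
  have lemB : ∀ j < k, ∀ i < k, (j + 1) % k = i → u j = u i →
      ∃ i' < k, ∃ j' < k, ∃ m ≤ k, (j' + 1) % k = i' ∧ ε j' = !(ε i') ∧ h i' (v m) = v m := by
    intro j hj i hi hmod huji
    have hvji : v (j+1) = v i := by
      rw [hvmod (j+1) hj, hmod]
    have hR : v (j+1) = h i (y i) := by rw [hvji]; exact hvy i hi
    by_cases hej : ε j = true <;> by_cases hei : ε i = true
    · -- both true : contradiction
      exfalso
      have huj : u j = v (j+1) := by simp [hu, hej]
      have hui : u i = v (i+1) := by simp [hu, hei]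
      have hyy : y j = y i := by
        rw [hyσ j hej, hyσ i hei, ← huj, ← hui, huji]
      have : q (y j) = q (v (j+1)) := by
        rw [hyy, ← hq i hi (y i), ← hR]
      rw [hyσ j hej] at this
      exact hσq (v (j+1)) this
    · -- ε j = true, ε i = false : good case
      simp only [Bool.not_eq_true] at hei
      have huj : u j = v (j+1) := by simp [hu, hej]
      have hui : u i = y i := by simp [hu, hei]
      have hvyi : v (j+1) = y i := by rw [← huj, huji, hui]
      have hfix : h i (v (j+1)) = v (j+1) := by rw [hvyi, ← hR]; exact hvyi
      exact ⟨i, hi, j, hj, j+1, hj, hmod, by simp [hej, hei], hfix⟩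
    · -- ε j = false, ε i = true : good case
      simp only [Bool.not_eq_true] at hej
      have huj : u j = y j := by simp [hu, hej]
      have hui : u i = v (i+1) := by simp [hu, hei]
      have hyj : y j = v (i+1) := by rw [← huj, huji, hui]
      have hvj1 : v (j+1) = y i := by rw [← hyσ' j hej, hyj, ← hyσ i hei]
      have hfix : h i (v (j+1)) = v (j+1) := by rw [hvj1, ← hR]; exact hvj1
      exact ⟨i, hi, j, hj, j+1, hj, hmod, by simp [hej, hei], hfix⟩
    · -- both false : contradiction
      exfalso
      simp only [Bool.not_eq_true] at hej hei
      have huj : u j = y j := by simp [hu, hej]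
      have hui : u i = y i := by simp [hu, hei]
      have hyy : y j = y i := by rw [← huj, ← hui, huji]
      have h1 : q (y i) = q (v (j+1)) := by rw [← hq i hi (y i), ← hR]
      have h2 : σ (y j) = v (j+1) := hyσ' j hej
      rw [hyy] at h2
      rw [← h2] at h1
      exact hσq (y i) h1.symm
  -- choose the maximal crossing
  obtain ⟨js, hjs, hmax⟩ := Finset.exists_max_image (Finset.range k)
    (fun j => β (c (u j))) ⟨0, Finset.mem_range.mpr hk⟩
  rw [Finset.mem_range] at hjs
  rcases EC js hjs with hC | hC
  · -- c (u js) = q (v js) : look at the previous step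
    set j := (js + (k-1)) % k with hjdef
    have hjk : j < k := Nat.mod_lt _ hk
    have hmod : (j + 1) % k = js := by
      rw [hjdef, Nat.mod_add_mod]
      have : js + (k-1) + 1 = js + k := by omega
      rw [this, Nat.add_mod_right, Nat.mod_eq_of_lt hjs]
    have hqvj : q (v (j+1)) = q (v js) := by
      rw [hvmod (j+1) hjk, hmod]
    have hle : β (c (u js)) ≤ β (c (u j)) := by
      rw [hC, ← hqvj]; exact E2 j hjk
    have hge : β (c (u j)) ≤ β (c (u js)) := hmax j (Finset.mem_range.mpr hjk)
    have : c (u j) = c (u js) := hβ (le_antisymm hge hle)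
    have huji : u j = u js := hcinj this
    exact lemB j hjk js hjs hmod huji
  · -- c (u js) = q (v (js+1)) : look at the next step
    set i := (js + 1) % k with hidef
    have hik : i < k := Nat.mod_lt _ hk
    have hqvi : q (v i) = q (v (js+1)) := by
      rw [← hvmod (js+1) hjs]
    have hle : β (c (u js)) ≤ β (c (u i)) := by
      rw [hC, ← hqvi]; exact E1 i hik
    have hge : β (c (u i)) ≤ β (c (u js)) := hmax i (Finset.mem_range.mpr hik)
    have : c (u i) = c (u js) := hβ (le_antisymm hge hle)
    have huji : u js = u i := hcinj this.symm
    exact lemB js hjs i hik hidef huji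

end Core

section MainInd

@[simp] lemma sg_sg_cancel (σ : PP) (b : Bool) (x : PP) : sg σ b * (sg σ (!b) * x) = x := by
  rw [← mul_assoc, sg_mul_not, one_mul]

lemma bool_flip {a b : Bool} (h : a = !b) : b = !a := by
  cases a <;> cases b <;> simp_all

def Red : List (PP × Bool) → Prop
  | [] => True
  | [_] => True
  | p :: r :: t => (r.2 = !p.2 → r.1 ≠ 1) ∧ Red (r :: t)

lemma find_unred : ∀ L : List (PP × Bool), Red L ∨
    ∃ X a e Y, L = X ++ (a, e) :: (1, !e) :: Y
  | [] => Or.inl trivial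
  | [_] => Or.inl trivial
  | p :: r :: t => by
    by_cases hr : r.1 = 1 ∧ r.2 = !p.2
    · right
      refine ⟨[], p.1, p.2, t, ?_⟩
      have hre : r = (1, !p.2) := by
        obtain ⟨h1, h2⟩ := hr
        cases r
        simp_all
      rw [hre]
      simp
    · rcases find_unred (r :: t) with h | ⟨X, a, e, Y, h⟩
      · exact Or.inl ⟨fun h2 h1 => hr ⟨h1, h2⟩, h⟩
      · right
        exact ⟨p :: X, a, e, Y, by rw [List.cons_append, ← h]⟩

lemma red_idx : ∀ L : List (PP × Bool), Red L → ∀ j, j + 1 < L.length →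
    (L.getD (j+1) (1, true)).2 = !(L.getD j (1, true)).2 → (L.getD (j+1) (1, true)).1 ≠ 1
  | [], _, j, hj => by simp at hj
  | [_], _, j, hj => by simp at hj
  | p :: r :: t, hR, 0, hj => by
    simpa using hR.1
  | p :: r :: t, hR, j+1, hj => by
    have := red_idx (r :: t) hR.2 j (by simpa using hj)
    simpa using this

variable {Qt : Type}

lemma mainW (σ : PP) (q : ℕ → Qt) (β : Qt → ℕ)
    (G : Subgroup PP) (hcof : ∀ g ∈ G, g ≠ 1 → {n : ℕ | g n = n}.Finite)
    (hqG : ∀ g ∈ G, ∀ z : ℕ, q (g z) = q z)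
    (hσq : ∀ x : ℕ, q (σ x) ≠ q x)
    (c : ℕ → Qt) (hcinj : Injective c)
    (hcor : ∀ u, c u = q u ∨ c u = q (σ u))
    (hcmax : ∀ u, β (q u) ≤ β (c u) ∧ β (q (σ u)) ≤ β (c u))
    (hβ : Injective β) :
    ∀ N (L : List (PP × Bool)), L.length ≤ N → (∀ p ∈ L, p.1 ∈ G) →
      Wrd σ L ∈ G ∨ {x : ℕ | Wrd σ L x = x}.Finite := by
  intro N
  induction N with
  | zero =>
    intro L hL _
    rw [List.length_eq_zero_iff.mp (Nat.le_zero.mp hL)]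
    exact Or.inl (one_mem G)
  | succ N ih =>
    intro L hL hmem
    rcases find_unred L with hred | ⟨X, a, e, Y, rfl⟩
    · -- linearly reduced
      cases L with
      | nil => exact Or.inl (by rw [Wrd_nil]; exact one_mem G)
      | cons p t =>
        set L := p :: t with hLdef
        have hL0 : L ≠ [] := by simp [hLdef]
        by_cases hw : p.1 = 1 ∧ p.2 = !((L.getLast hL0).2)
        · -- cyclically unreduced : wrap reduction
          have ht0 : t ≠ [] := by
            intro h
            have : L.getLast hL0 = p := by
              subst h; rfl
            rw [this] at hw
            cases hb : p.2 <;> rw [hb] at hw <;> simp at hw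
          set r := t.getLast ht0 with hrdef
          have hlast : L.getLast hL0 = r := List.getLast_cons ht0
          have htd : t.dropLast ++ [r] = t := List.dropLast_append_getLast ht0
          have hrG : r.1 ∈ G := hmem r (by
            rw [hLdef]
            exact List.mem_cons_of_mem _ (List.getLast_mem ht0))
          have hsg : sg σ r.2 = (sg σ p.2)⁻¹ := by
            have : r.2 = !p.2 := bool_flip (by rw [← hlast]; exact hw.2)
            rw [this, sg_not]
          have hWL : Wrd σ L = sg σ p.2 * Wrd σ t.dropLast * r.1 * (sg σ p.2)⁻¹ := by
            conv_lhs => rw [hLdef, ← htd]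
            rw [Wrd_cons, Wrd_append, Wrd_cons, Wrd_nil, blk, blk, hw.1, one_mul, hsg]
            group
          cases hD : t.dropLast with
          | nil =>
            rw [hD, Wrd_nil] at hWL
            by_cases hr1 : r.1 = 1
            · left
              have h1 : Wrd σ L = 1 := by rw [hWL, hr1]; group
              rw [h1]
              exact one_mem G
            · right
              rw [hWL]
              have : sg σ p.2 * 1 * r.1 * (sg σ p.2)⁻¹ = ((sg σ p.2)⁻¹)⁻¹ * r.1 * (sg σ p.2)⁻¹ := by
                group
              rw [this, fix_conj]
              exact Set.Finite.preimage (Equiv.injective _).injOn (hcof r.1 hrG hr1)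
          | cons db D' =>
            set V := Wrd σ ((r.1 * db.1, db.2) :: D') with hVdef
            have hVa : V = r.1 * Wrd σ (db :: D') := by
              rw [hVdef, Wrd_cons, Wrd_cons, blk, blk, mul_assoc, mul_assoc, mul_assoc]
            have hmemV : ∀ s ∈ (r.1 * db.1, db.2) :: D', s.1 ∈ G := by
              intro s hs
              rcases List.mem_cons.mp hs with rfl | hs
              · exact mul_mem hrG (hmem db (by
                  rw [hLdef, ← htd, hD]
                  exact List.mem_cons_of_mem _ (List.mem_append_left _ (List.mem_cons_self))))
              · refine hmem s ?_
                rw [hLdef, ← htd, hD]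
                exact List.mem_cons_of_mem _ (List.mem_append_left _ (List.mem_cons_of_mem _ hs))
            have hlen : ((r.1 * db.1, db.2) :: D').length ≤ N := by
              have h1 : L.length ≤ N + 1 := hL
              have h2 : t.dropLast.length = t.length - 1 := List.length_dropLast
              rw [hLdef] at h1
              simp only [List.length_cons] at h1 ⊢
              have h3 : (db :: D').length = t.dropLast.length := by rw [hD]
              simp only [List.length_cons] at h3
              omega
            have hconj : Wrd σ L = (sg σ p.2 * r.1⁻¹) * V * (sg σ p.2 * r.1⁻¹)⁻¹ := by
              rw [hWL, hVa, hD]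
              group
            rcases ih ((r.1 * db.1, db.2) :: D') hlen hmemV with hVG | hVfin
            · by_cases hV1 : V = 1
              · left
                have h1 : Wrd σ L = 1 := by rw [hconj, hV1]; group
                rw [h1]
                exact one_mem G
              · right
                rw [hconj]
                have : (sg σ p.2 * r.1⁻¹) * V * (sg σ p.2 * r.1⁻¹)⁻¹
                    = ((sg σ p.2 * r.1⁻¹)⁻¹)⁻¹ * V * (sg σ p.2 * r.1⁻¹)⁻¹ := by group
                rw [this, fix_conj]
                exact Set.Finite.preimage (Equiv.injective _).injOn (hcof V hVG hV1)
            · right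
              rw [hconj]
              have : (sg σ p.2 * r.1⁻¹) * V * (sg σ p.2 * r.1⁻¹)⁻¹
                  = ((sg σ p.2 * r.1⁻¹)⁻¹)⁻¹ * V * (sg σ p.2 * r.1⁻¹)⁻¹ := by group
              rw [this, fix_conj]
              exact Set.Finite.preimage (Equiv.injective _).injOn hVfin
        · -- fully reduced : core combinatorial lemma
          right
          set k := L.length with hkdef
          have hk : 0 < k := by rw [hkdef, hLdef]; simp
          set d : PP × Bool := (1, true) with hddef
          set hh : ℕ → PP := fun i => (L.getD i d).1 with hhdef
          set εε : ℕ → Bool := fun i => (L.getD i d).2 with hεdef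
          have hmem' : ∀ i < k, (L.getD i d).1 ∈ G := by
            intro i hi
            rw [List.getD_eq_getElem L d hi]
            exact hmem _ (List.getElem_mem _)
          have hne : ∀ i < k, ∀ j < k, (j + 1) % k = i → εε j = !(εε i) → hh i ≠ 1 := by
            intro i hi j hj hmod hεop
            rcases Nat.lt_or_ge (j+1) k with hlt | hge
            · have hij : i = j + 1 := by rw [← hmod, Nat.mod_eq_of_lt hlt]
              subst hij
              exact red_idx L hred j hlt (bool_flip hεop)
            · have hjk : j + 1 = k := by omega
              have hi0 : i = 0 := by rw [← hmod, hjk, Nat.mod_self]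
              subst hi0
              have hgd0 : L.getD 0 d = p := by rw [hLdef]; rfl
              have hgdj : L.getD j d = L.getLast hL0 := by
                rw [List.getD_eq_getElem L d hj, List.getLast_eq_getElem]
                congr 1
                omega
              intro h1
              apply hw
              constructor
              · rw [← hgd0]; exact h1
              · apply bool_flip
                have := hεop
                rw [hεdef] at this
                simp only at this
                rw [hgdj, hgd0] at this
                exact this
          have hTfin : ∀ i m : ℕ,
              ({x : ℕ | hh i ≠ 1 ∧ hh i (Wrd σ (L.drop m) x) = Wrd σ (L.drop m) x}).Finite := by
            intro i m
            by_cases h1 : hh i = 1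
            · refine Set.Finite.subset Set.finite_empty ?_
              intro x hx
              exact absurd h1 hx.1
            · have hik : i < k := by
                by_contra hik
                apply h1
                rw [hhdef]
                simp only
                rw [List.getD_eq_default]
                exact hkdef ▸ (not_lt.mp hik)
              refine Set.Finite.subset (Set.Finite.preimage (Equiv.injective
                (Wrd σ (L.drop m))).injOn (hcof (hh i) (hmem' i hik) h1)) ?_
              intro x hx
              exact hx.2
          refine Set.Finite.subset (Set.Finite.biUnion (Finset.range k).finite_toSet
            (fun i _ => Set.Finite.biUnion (Finset.range (k+1)).finite_toSet
              (fun m _ => hTfin i m))) ?_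
          intro x hx
          simp only [Set.mem_setOf_eq] at hx
          obtain ⟨i, hik, j, hjk, m, hmk, hmod, hεop, hfix⟩ :=
            core q β σ hσq c hcinj hcor hcmax hβ k hk hh εε
              (fun m' => Wrd σ (L.drop m') x)
              (by
                intro j hj
                have hj' : j < L.length := hkdef ▸ hj
                rw [List.drop_eq_getElem_cons hj', Wrd_cons, hhdef, hεdef]
                simp only
                rw [List.getD_eq_getElem L d hj']
                rfl)
              (by
                rw [hkdef, List.drop_length, List.drop_zero, Wrd_nil]
                simp only [Equiv.Perm.one_apply]
                exact hx.symm)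
              (by
                intro j hj z
                exact hqG _ (hmem' j hj) z)
          exact Set.mem_biUnion (Finset.mem_coe.mpr (Finset.mem_range.mpr hik))
            (Set.mem_biUnion (Finset.mem_coe.mpr (Finset.mem_range.mpr (Nat.lt_succ_of_le hmk)))
              ⟨hne i hik j hjk hmod hεop, hfix⟩)
    · -- unreduced : cancel
      have hXmem : ∀ s ∈ X, s.1 ∈ G := fun s hs => hmem s (List.mem_append_left _ hs)
      have haG : a ∈ G := by
        have := hmem (a, e) (List.mem_append_right _ (List.mem_cons_self))
        exact this
      cases Y with
      | cons b Y' =>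
        have hW : Wrd σ (X ++ (a, e) :: (1, !e) :: b :: Y')
            = Wrd σ (X ++ (a * b.1, b.2) :: Y') := by
          simp [Wrd_append, Wrd_cons, blk, mul_assoc]
        rw [hW]
        apply ih
        · have := hL
          simp only [List.length_append, List.length_cons] at this ⊢
          omega
        · intro s hs
          rcases List.mem_append.mp hs with hs | hs
          · exact hXmem s hs
          · rcases List.mem_cons.mp hs with rfl | hs
            · exact mul_mem haG (hmem b (by simp))
            · exact hmem s (by simp [hs])
      | nil =>
        have hW : Wrd σ (X ++ [(a, e), (1, !e)]) = Wrd σ X * a := by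
          simp [Wrd_append, Wrd_cons, blk, mul_assoc, sg_mul_not]
        rw [hW]
        cases X with
        | nil =>
          left
          rw [Wrd_nil, one_mul]
          exact haG
        | cons bf X' =>
          set V := Wrd σ ((a * bf.1, bf.2) :: X') with hVdef
          have hVa : V = a * Wrd σ (bf :: X') := by
            rw [hVdef, Wrd_cons, Wrd_cons, blk, blk, mul_assoc, mul_assoc, mul_assoc]
          have hconj : Wrd σ (bf :: X') * a = a⁻¹ * V * a := by
            rw [hVa]
            group
          have hlen : ((a * bf.1, bf.2) :: X').length ≤ N := by
            have := hL
            simp only [List.length_append, List.length_cons] at this ⊢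
            omega
          have hmemV : ∀ s ∈ (a * bf.1, bf.2) :: X', s.1 ∈ G := by
            intro s hs
            rcases List.mem_cons.mp hs with rfl | hs
            · exact mul_mem haG (hXmem bf (by simp))
            · exact hXmem s (by simp [hs])
          rcases ih _ hlen hmemV with hVG | hVfin
          · left
            rw [hconj]
            exact mul_mem (mul_mem (inv_mem haG) hVG) haG
          · right
            rw [hconj, fix_conj]
            exact Set.Finite.preimage (Equiv.injective _).injOn hVfin

end MainInd

section Assemble

lemma toBlocks (σ : PP) (G : Subgroup PP) :
    ∀ l : List PP, (∀ a ∈ l, a ∈ (((↑G : Set PP) ∪ {σ}) ∪ ((↑G : Set PP) ∪ {σ})⁻¹)) →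
      ∃ (L : List (PP × Bool)) (g0 : PP), (∀ p ∈ L, p.1 ∈ G) ∧ g0 ∈ G ∧
        Wrd σ L * g0 = l.prod
  | [] => fun _ => ⟨[], 1, by simp, one_mem G, by simp⟩
  | a :: t => fun hmem => by
    obtain ⟨L, g0, hLm, hg0, hpr⟩ := toBlocks σ G t (fun b hb => hmem b (List.mem_cons_of_mem _ hb))
    have ha := hmem a (List.mem_cons_self)
    have hcase : a ∈ G ∨ a = σ ∨ a = σ⁻¹ := by
      rcases ha with (ha | ha) | ha
      · exact Or.inl ha
      · exact Or.inr (Or.inl ha)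
      · rw [Set.mem_inv] at ha
        rcases ha with ha | ha
        · exact Or.inl ((inv_mem_iff (x := a)).mp ha)
        · right; right
          rw [Set.mem_singleton_iff] at ha
          rw [← ha, inv_inv]
    rw [List.prod_cons, ← hpr]
    rcases hcase with haG | rfl | rfl
    · cases L with
      | nil =>
        refine ⟨[], a * g0, by simp, mul_mem haG hg0, ?_⟩
        simp [mul_assoc]
      | cons bf L' =>
        refine ⟨(a * bf.1, bf.2) :: L', g0, ?_, hg0, ?_⟩
        · intro s hs
          rcases List.mem_cons.mp hs with rfl | hs
          · exact mul_mem haG (hLm bf (List.mem_cons_self))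
          · exact hLm s (List.mem_cons_of_mem _ hs)
        · rw [Wrd_cons, Wrd_cons, blk, blk]
          group
    · refine ⟨(1, true) :: L, g0, ?_, hg0, ?_⟩
      · intro s hs
        rcases List.mem_cons.mp hs with rfl | hs
        · exact one_mem G
        · exact hLm s hs
      · rw [Wrd_cons, blk]
        simp [sg, mul_assoc]
    · refine ⟨(1, false) :: L, g0, ?_, hg0, ?_⟩
      · intro s hs
        rcases List.mem_cons.mp hs with rfl | hs
        · exact one_mem G
        · exact hLm s hs
      · rw [Wrd_cons, blk]
        simp [sg, mul_assoc]

end Assemble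

end Kast

/-- A subgroup of `Equiv.Perm ℕ` is cofinitary if each of its non-identity
elements has only finitely many fixed points. -/
def IsCofinitaryGroup (G : Subgroup (Equiv.Perm ℕ)) : Prop :=
  ∀ g ∈ G, g ≠ 1 → {n : ℕ | g n = n}.Finite

/-- **Kastermans.** A maximal cofinitary subgroup of `S(ω)` has only finitely
many orbits under its natural action on `ω`. -/
theorem maximal_cofinitary_group_finitely_many_orbits
    (G : Subgroup (Equiv.Perm ℕ))
    (hcof : IsCofinitaryGroup G)
    (hmax : ∀ H : Subgroup (Equiv.Perm ℕ), G ≤ H → IsCofinitaryGroup H → H = G) :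
    Finite (Quotient (MulAction.orbitRel G ℕ)) := by
  classical
  by_contra hfin
  have hinf : Infinite (Quotient (MulAction.orbitRel G ℕ)) := not_finite_iff_infinite.mp hfin
  set Qt := Quotient (MulAction.orbitRel G ℕ) with hQt
  set q : ℕ → Qt := Quotient.mk (MulAction.orbitRel G ℕ) with hq
  obtain ⟨β, hβ⟩ := Countable.exists_injective_nat Qt
  have hqG : ∀ g ∈ G, ∀ z : ℕ, q (g z) = q z := by
    intro g hg z
    apply Quotient.sound
    exact ⟨⟨g, hg⟩, rfl⟩
  have hfresh : ∀ m : ℕ, ∃ x : ℕ, m < β (q x) := by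
    intro m
    have hfin' : {cc : Qt | β cc ≤ m}.Finite :=
      Set.Finite.preimage hβ.injOn (Set.finite_Iic m)
    obtain ⟨cq, hcq⟩ := hfin'.infinite_compl.nonempty
    obtain ⟨x, hx⟩ := Quotient.exists_rep cq
    refine ⟨x, ?_⟩
    have : q x = cq := hx
    rw [this]
    exact lt_of_not_ge hcq
  obtain ⟨σ, hσq, c, hcinj, hcor, hcmax⟩ := Kast.exists_sigma q β hfresh
  set H := Subgroup.closure ((↑G : Set (Equiv.Perm ℕ)) ∪ {σ}) with hH
  have hGH : G ≤ H := fun g hg => Subgroup.subset_closure (Or.inl hg)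
  have hσH : σ ∈ H := Subgroup.subset_closure (Or.inr rfl)
  have hσG : σ ∉ G := fun hmemσ => hσq 0 (hqG σ hmemσ 0)
  have hHcof : IsCofinitaryGroup H := by
    intro h hh hne
    have hh' : h ∈ Submonoid.closure (((↑G : Set (Equiv.Perm ℕ)) ∪ {σ})
        ∪ ((↑G : Set (Equiv.Perm ℕ)) ∪ {σ})⁻¹) := by
      rw [← Subgroup.closure_toSubmonoid]
      exact hh
    obtain ⟨l, hlmem, hlprod⟩ := Submonoid.exists_list_of_mem_closure hh'
    obtain ⟨L, g0, hLm, hg0, hprod⟩ := Kast.toBlocks σ G l hlmem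
    have hhW : h = Kast.Wrd σ L * g0 := by rw [hprod, hlprod]
    cases L with
    | nil =>
      have : h ∈ G := by
        rw [hhW, Kast.Wrd_nil, one_mul]
        exact hg0
      exact hcof h this hne
    | cons bf L' =>
      set V := Kast.Wrd σ ((g0 * bf.1, bf.2) :: L') with hVdef
      have hVa : V = g0 * Kast.Wrd σ (bf :: L') := by
        rw [hVdef, Kast.Wrd_cons, Kast.Wrd_cons, Kast.blk, Kast.blk, mul_assoc, mul_assoc,
          mul_assoc]
      have hconj : h = g0⁻¹ * V * g0 := by
        rw [hhW, hVa]
        group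
      have hmemV : ∀ s ∈ (g0 * bf.1, bf.2) :: L', s.1 ∈ G := by
        intro s hs
        rcases List.mem_cons.mp hs with rfl | hs
        · exact mul_mem hg0 (hLm bf (List.mem_cons_self))
        · exact hLm s (List.mem_cons_of_mem _ hs)
      rcases Kast.mainW σ q β G hcof hqG hσq c hcinj hcor hcmax hβ
          ((g0 * bf.1, bf.2) :: L').length _ le_rfl hmemV with hVG | hVfin
      · have : h ∈ G := by
          rw [hconj]
          exact mul_mem (mul_mem (inv_mem hg0) hVG) hg0
        exact hcof h this hne
      · rw [hconj, Kast.fix_conj]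
        exact Set.Finite.preimage (Equiv.injective _).injOn hVfin
  exact hσG (hmax H hGH hHcof ▸ hσH)
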